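/- Let P be an irreducible row-stochastic S×S real matrix with stationary distribution μ and mean first passage times T_{ij}, and suppose T_{ij} ≤ D′ for all i, j. Fix an index n, let p_nᵀ denote the n-th row of P and e_n the n-th standard basis column vector, and suppose the matrix I − P + e_n p_nᵀ is invertible with inverse G. Then |G_{ij} − G_{jj}| ≤ 2 μ_j D′ for all i, j. -/
import Mathlib


/-- A row-stochastic matrix: nonnegative entries, each row sums to 1. -/
def RowStochastic {S : ℕ} (P : Matrix (Fin S) (Fin S) ℝ) : Prop :=
  (∀ i j, 0 ≤ P i j) ∧ ∀ i, ∑ j, P i j = 1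

/-- Irreducibility of a Markov transition matrix: every state reaches every state. -/
def MCIrreducible {S : ℕ} (P : Matrix (Fin S) (Fin S) ℝ) : Prop :=
  ∀ i j, ∃ n : ℕ, 1 ≤ n ∧ 0 < (P ^ n) i j

/-- `μ` is a stationary distribution of `P`. -/
def IsStationaryDist {S : ℕ} (P : Matrix (Fin S) (Fin S) ℝ) (μ : Fin S → ℝ) : Prop :=
  (∀ j, 0 ≤ μ j) ∧ (∑ j, μ j = 1) ∧ ∀ j, ∑ i, μ i * P i j = μ j

/-- `T` is the matrix of mean first passage times of `P`: the unique positive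
solution of `T i j = 1 + ∑_{k ≠ j} P i k * T k j`. -/
def IsMFPT {S : ℕ} (P T : Matrix (Fin S) (Fin S) ℝ) : Prop :=
  (∀ i j, 0 < T i j) ∧
    ∀ i j, T i j = 1 + ∑ k ∈ Finset.univ.filter (fun k => k ≠ j), P i k * T k j

/-- The rank-one matrix `e_n p_nᵀ`, whose `n`-th row is the `n`-th row of `P`
and whose other rows vanish. -/
def rankOneRow {S : ℕ} (P : Matrix (Fin S) (Fin S) ℝ) (n : Fin S) :
    Matrix (Fin S) (Fin S) ℝ :=
  Matrix.of fun i j => if i = n then P n j else 0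

/-- Bound on the entries of the g-inverse `G = (I − P + e_n p_nᵀ)⁻¹`:
if all mean first passage times are at most `D′`, then `|G_{ij} − G_{jj}| ≤ 2 μ_j D′`. -/
theorem g_inverse_entry_bound
    {S : ℕ}
    (P : Matrix (Fin S) (Fin S) ℝ)
    (hP : RowStochastic P) (hirr : MCIrreducible P)
    (μ : Fin S → ℝ) (hμ : IsStationaryDist P μ)
    (T : Matrix (Fin S) (Fin S) ℝ) (hT : IsMFPT P T)
    (D' : ℝ) (hD' : 1 ≤ D')
    (hTD : ∀ i j, T i j ≤ D')
    (n : Fin S)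
    (G : Matrix (Fin S) (Fin S) ℝ)
    (hG₁ : (1 - P + rankOneRow P n) * G = 1)
    (hG₂ : G * (1 - P + rankOneRow P n) = 1) :
    ∀ i j, |G i j - G j j| ≤ 2 * μ j * D' := by

  intro i j
  obtain ⟨hTpos, hTeq⟩ := hT
  obtain ⟨hμ0, hμ1, hμst⟩ := hμ
  set A : Matrix (Fin S) (Fin S) ℝ := 1 - P + rankOneRow P n with hA
  have hAentry : ∀ k m, A k m =
      (if k = m then (1:ℝ) else 0) - P k m + (if k = n then P n m else 0) := by
    intro k m
    simp [hA, rankOneRow, Matrix.add_apply, Matrix.sub_apply, Matrix.one_apply]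
  -- row sums of A
  have hrowA : ∀ k, ∑ m, A k m = if k = n then (1:ℝ) else 0 := by
    intro k
    simp only [hAentry]
    rw [Finset.sum_add_distrib, Finset.sum_sub_distrib]
    by_cases hk : k = n <;> simp [hk, hP.2]
  -- G i n = 1
  have hGin : ∀ i, G i n = 1 := by
    intro i
    have h := congrArg (fun M : Matrix (Fin S) (Fin S) ℝ => ∑ j, M i j) hG₂
    simp only [Matrix.mul_apply] at h
    rw [Finset.sum_comm] at h
    have hL : ∑ k, ∑ m, G i k * A k m = G i n := by
      have hc : ∀ k, ∑ m, G i k * A k m = G i k * (if k = n then (1:ℝ) else 0) := by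
        intro k; rw [← Finset.mul_sum, hrowA k]
      rw [Finset.sum_congr rfl (fun k _ => hc k)]
      simp
    rw [hL] at h
    simpa [Matrix.one_apply] using h
  -- ∑_k G i k * P k j = G i j + P n j - δ_ij
  have hGP : ∀ i j, ∑ k, G i k * P k j = G i j + P n j - (if i = j then (1:ℝ) else 0) := by
    intro i j
    have h := congrFun (congrFun hG₂ i) j
    rw [Matrix.mul_apply] at h
    have hexp : ∀ k, G i k * A k j
        = (if k = j then G i k else 0) - G i k * P k j + (if k = n then G i k * P n j else 0) := by
      intro k
      rw [hAentry]
      split_ifs <;> ring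
    rw [Finset.sum_congr rfl (fun k _ => hexp k), Finset.sum_add_distrib,
      Finset.sum_sub_distrib] at h
    simp only [Finset.sum_ite_eq', Finset.mem_univ, if_true] at h
    rw [hGin i] at h
    have h1 : (1 : Matrix (Fin S) (Fin S) ℝ) i j = if i = j then (1:ℝ) else 0 := by
      simp [Matrix.one_apply]
    rw [h1] at h
    linarith
  -- full-sum MFPT equation
  have hMFPT : ∀ k j, ∑ m, P k m * T m j = T k j - 1 + P k j * T j j := by
    intro k j
    have h := hTeq k j
    rw [Finset.filter_ne'] at h
    have hsplit : ∑ m, P k m * T m j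
        = P k j * T j j + ∑ m ∈ Finset.univ.erase j, P k m * T m j :=
      (Finset.add_sum_erase _ _ (Finset.mem_univ j)).symm
    rw [hsplit]; linarith
  -- key identity (*)
  have hstar : ∀ i j, T i j = (∑ k, G i k) - T j j * G i j
      + (if i = j then T j j else 0) + T n j - 1 := by
    intro i j
    have hTi : T i j = ∑ k, (∑ m, G i m * A m k) * T k j := by
      have hδ : ∀ k, (∑ m, G i m * A m k) = if i = k then (1:ℝ) else 0 := by
        intro k
        have h := congrFun (congrFun hG₂ i) k
        rw [Matrix.mul_apply] at h
        rw [h]; simp [Matrix.one_apply]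
      rw [Finset.sum_congr rfl (fun k _ => by rw [hδ k])]
      simp
    have hswap : ∑ k, (∑ m, G i m * A m k) * T k j
        = ∑ m, G i m * (∑ k, A m k * T k j) := by
      simp only [Finset.sum_mul, Finset.mul_sum]
      rw [Finset.sum_comm]
      exact Finset.sum_congr rfl fun m _ =>
        Finset.sum_congr rfl fun k _ => by ring
    have hinner : ∀ m, ∑ k, A m k * T k j
        = (1 - P m j * T j j) + (if m = n then T n j - 1 + P n j * T j j else 0) := by
      intro m
      have hexp : ∀ k, A m k * T k j
          = (if m = k then T k j else 0) - P m k * T k j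
            + (if m = n then P n k * T k j else 0) := by
        intro k
        rw [hAentry]
        split_ifs <;> ring
      rw [Finset.sum_congr rfl (fun k _ => hexp k), Finset.sum_add_distrib,
        Finset.sum_sub_distrib]
      simp only [Finset.sum_ite_eq, Finset.mem_univ, if_true]
      by_cases hm : m = n
      · simp only [hm, eq_self_iff_true, if_true]
        rw [hMFPT n j]; ring
      · simp only [if_neg hm, Finset.sum_const_zero]
        rw [hMFPT m j]; ring
    rw [hTi, hswap, Finset.sum_congr rfl (fun m _ => by rw [hinner m])]
    have hout : ∑ m, G i m * ((1 - P m j * T j j)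
        + (if m = n then T n j - 1 + P n j * T j j else 0))
        = (∑ m, G i m) - T j j * (∑ m, G i m * P m j)
          + G i n * (T n j - 1 + P n j * T j j) := by
      have hexp : ∀ m, G i m * ((1 - P m j * T j j)
          + (if m = n then T n j - 1 + P n j * T j j else 0))
          = G i m - T j j * (G i m * P m j)
            + (if m = n then G i m * (T n j - 1 + P n j * T j j) else 0) := by
        intro m; split_ifs <;> ring
      rw [Finset.sum_congr rfl (fun m _ => hexp m), Finset.sum_add_distrib,
        Finset.sum_sub_distrib, ← Finset.mul_sum]
      simp only [Finset.sum_ite_eq', Finset.mem_univ, if_true]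
    rw [hout, hGP i j, hGin i]
    split_ifs <;> ring
  -- μ j * T j j = 1
  have hmuT : ∀ j, μ j * T j j = 1 := by
    intro j
    have h1 : ∑ k, μ k * (∑ m, P k m * T m j) = ∑ m, μ m * T m j := by
      simp only [Finset.mul_sum]
      rw [Finset.sum_comm]
      have : ∀ m, ∑ k, μ k * (P k m * T m j) = μ m * T m j := by
        intro m
        have h := hμst m
        calc ∑ k, μ k * (P k m * T m j) = (∑ k, μ k * P k m) * T m j := by
              rw [Finset.sum_mul]; exact Finset.sum_congr rfl fun k _ => by ring
          _ = μ m * T m j := by rw [h]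
      exact Finset.sum_congr rfl fun m _ => this m
    have h2 : ∑ k, μ k * (∑ m, P k m * T m j)
        = (∑ m, μ m * T m j) - 1 + μ j * T j j := by
      have : ∀ k, μ k * (∑ m, P k m * T m j) = μ k * T k j - μ k + μ k * P k j * T j j := by
        intro k; rw [hMFPT k j]; ring
      rw [Finset.sum_congr rfl (fun k _ => this k), Finset.sum_add_distrib,
        Finset.sum_sub_distrib, hμ1]
      congr 1
      calc ∑ k, μ k * P k j * T j j = (∑ k, μ k * P k j) * T j j := by
            rw [Finset.sum_mul]
        _ = μ j * T j j := by rw [hμst j]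
    rw [h1] at h2
    linarith
  -- row sums of G
  have hr : ∀ i, (∑ k, G i k) = T i n + 1 - (if i = n then T n n else 0) := by
    intro i
    have h := hstar i n
    rw [hGin i] at h
    split_ifs at h ⊢ <;> linarith
  -- combine
  have key : T j j * (G i j - G j j)
      = (∑ k, G i k) - (∑ k, G j k) + (if i = j then T j j else 0) - T i j := by
    have h1 := hstar i j
    have h2 := hstar j j
    rw [if_pos rfl] at h2
    linarith
  have hfin : G i j - G j j
      = μ j * ((T i n + 1 - (if i = n then T n n else 0))
        - (T j n + 1 - (if j = n then T n n else 0))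
        + (if i = j then T j j else 0) - T i j) := by
    rw [← hr i, ← hr j, ← key]
    calc G i j - G j j = (μ j * T j j) * (G i j - G j j) := by rw [hmuT j]; ring
      _ = μ j * (T j j * (G i j - G j j)) := by ring
  rw [hfin, abs_mul, abs_of_nonneg (hμ0 j)]
  have hX : |((T i n + 1 - (if i = n then T n n else 0))
        - (T j n + 1 - (if j = n then T n n else 0))
        + (if i = j then T j j else 0) - T i j)| ≤ 2 * D' := by
    rw [abs_le]
    have h1 := hTpos i n; have h2 := hTpos j n; have h3 := hTpos i j
    have h4 := hTD i n; have h5 := hTD j n; have h6 := hTD i j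
    have h7 := hTpos n n; have h8 := hTD n n
    have h9 := hTpos j j; have h10 := hTD j j
    by_cases hij : i = j
    · subst hij
      split_ifs <;> constructor <;> linarith
    · rw [if_neg hij]
      by_cases hin : i = n
      · subst hin
        rw [if_pos rfl, if_neg (fun h : j = i => hij h.symm)]
        constructor <;> linarith
      · rw [if_neg hin]
        by_cases hjn : j = n
        · subst hjn
          rw [if_pos rfl]
          constructor <;> linarith
        · rw [if_neg hjn]
          constructor <;> linarith
  have hfin2 := mul_le_mul_of_nonneg_left hX (hμ0 j)
  have heq : μ j * (2 * D') = 2 * μ j * D' := by ring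
  linarith
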